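/- Commutator of stretching and transport is of zeroth order (explicit formula from the proof of Lemma 2.2): For all smooth vector fields ξ, g : ℝ³ → ℝ³, every x ∈ ℝ³ and every l ∈ {1,2,3}, the l-th component satisfies (𝓣_ξ(𝓛_ξ g) − 𝓛_ξ(𝓣_ξ g))^l(x) = − Σ_{j=1}^{3} Σ_{k=1}^{3} ξ^j(x) g^k(x) ∂_j∂_l ξ^k(x). -/

import Mathlib

open MeasureTheory

noncomputable section

/-- Points of ℝ³ (as `Fin 3 → ℝ`). -/
abbrev V3 := Fin 3 → ℝ
/-- Vector fields on ℝ³. -/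
abbrev VF := V3 → V3

/-- Smoothness of a vector field. -/
def SmoothVF (f : VF) : Prop := ContDiff ℝ (⊤ : ℕ∞) f

/-- Smoothness of a scalar function. -/
def SmoothS (p : V3 → ℝ) : Prop := ContDiff ℝ (⊤ : ℕ∞) p

/-- The periodicity cell [0,1)³. -/
def cube : Set V3 := Set.univ.pi fun _ => Set.Ico (0:ℝ) 1

/-- Partial derivative in the j-th coordinate, acting componentwise. -/
def pd (j : Fin 3) (f : VF) : VF := fun x => fderiv ℝ f x (Pi.single j 1)

/-- Iterated derivative D^α = ∂₁^{α₁}∂₂^{α₂}∂₃^{α₃} for a multi-index α = (α₁, α₂, α₃). -/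
def Dm (α : ℕ × ℕ × ℕ) (f : VF) : VF :=
  (pd 0)^[α.1] ((pd 1)^[α.2.1] ((pd 2)^[α.2.2] f))

/-- The order |α| of a multi-index. -/
def mdeg (α : ℕ × ℕ × ℕ) : ℕ := α.1 + α.2.1 + α.2.2

/-- ℤ³-periodicity of a vector field. -/
def Periodic3 (f : VF) : Prop :=
  ∀ (x : V3) (k : Fin 3 → ℤ), f (x + fun i => (k i : ℝ)) = f x

/-- ℤ³-periodicity of a scalar function. -/
def PeriodicS (p : V3 → ℝ) : Prop :=
  ∀ (x : V3) (k : Fin 3 → ℤ), p (x + fun i => (k i : ℝ)) = p x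

/-- Divergence-free: Σ_j ∂_j f^j ≡ 0. -/
def DivFree (f : VF) : Prop := ∀ x, ∑ j, pd j f x j = 0

/-- Mean-zero over the periodicity cell. -/
def MeanZero (f : VF) : Prop := (∫ x in cube, f x) = 0

/-- The L² inner product over the periodicity cell. -/
def L2inner (f g : VF) : ℝ := ∫ x in cube, ∑ i, f x i * g x i

/-- The finite set of multi-indices of order at most m. -/
def midx (m : ℕ) : Finset (ℕ × ℕ × ℕ) :=
  (Finset.range (m+1) ×ˢ Finset.range (m+1) ×ˢ Finset.range (m+1)).filter
    fun α => mdeg α ≤ m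

lemma midx_nonempty (m : ℕ) : (midx m).Nonempty :=
  ⟨(0,0,0), Finset.mem_filter.mpr ⟨Finset.mem_product.mpr ⟨Finset.mem_range.mpr (Nat.succ_pos m),
    Finset.mem_product.mpr ⟨Finset.mem_range.mpr (Nat.succ_pos m), Finset.mem_range.mpr (Nat.succ_pos m)⟩⟩,
    Nat.zero_le m⟩⟩

/-- The W^{m,2} inner product ⟨f,g⟩_{W^{m,2}} = Σ_{|α|≤m} ⟨D^α f, D^α g⟩_{L²}. -/
def sobInner (m : ℕ) (f g : VF) : ℝ := ∑ α ∈ midx m, L2inner (Dm α f) (Dm α g)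

/-- The squared W^{m,2} norm. -/
def sobNormSq (m : ℕ) (f : VF) : ℝ := sobInner m f f

/-- The W^{k,∞} norm: max over |α| ≤ k of sup_x |D^α ξ(x)|. -/
def WinfNorm (k : ℕ) (ξ : VF) : ℝ :=
  (midx k).sup' (midx_nonempty k) fun α => ⨆ x, ‖Dm α ξ x‖

/-- The transport operator 𝓛_ξ f = Σ_j ξ^j ∂_j f. -/
def transport (ξ f : VF) : VF := fun x => ∑ j, ξ x j • pd j f x

/-- The stretching operator 𝓣_ξ f, with l-th component Σ_j f^j ∂_l ξ^j. -/
def stretch (ξ f : VF) : VF := fun x l => ∑ j, f x j * pd l ξ x j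

/-- The L²-adjoint 𝓣*_ξ g, with j-th component Σ_l g^l ∂_l ξ^j. -/
def stretchStar (ξ g : VF) : VF := fun x j => ∑ l, g x l * pd l ξ x j

/-- The transport–stretching operator B_ξ = 𝓛_ξ + 𝓣_ξ. -/
def Bop (ξ f : VF) : VF := fun x => transport ξ f x + stretch ξ f x

/-- The gradient of a scalar function. -/
def grad (p : V3 → ℝ) : VF := fun x i => fderiv ℝ p x (Pi.single i 1)

/-- `IsLeray u g` : g is the Leray projection 𝒫u of u, i.e. g is a ℤ³-periodic smooth
divergence-free mean-zero field and u − g = ∇p + c for some ℤ³-periodic smooth scalar p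
and constant vector c. -/
def IsLeray (u g : VF) : Prop :=
  Periodic3 g ∧ SmoothVF g ∧ DivFree g ∧ MeanZero g ∧
  ∃ (p : V3 → ℝ) (c : V3), PeriodicS p ∧ SmoothS p ∧
    ∀ x, u x - g x = grad p x + c

/-- The componentwise Laplacian. -/
def lap (f : VF) : VF := fun x => ∑ j, pd j (pd j f) x

/-- The Stokes inner product ⟨u,v⟩_{A^{m/2}}. -/
def stokesInner (m : ℕ) (u v : VF) : ℝ :=
  if m % 2 = 0 then L2inner (lap^[m/2] u) (lap^[m/2] v)
  else ∑ j : Fin 3, L2inner (pd j (lap^[m/2] u)) (pd j (lap^[m/2] v))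

/-- A ℤ³-periodic smooth divergence-free mean-zero vector field. -/
def GoodField (f : VF) : Prop :=
  Periodic3 f ∧ SmoothVF f ∧ DivFree f ∧ MeanZero f

lemma smooth_pd {f : VF} (hf : SmoothVF f) (j : Fin 3) : SmoothVF (pd j f) :=
  (hf.fderiv_right (le_refl _)).clm_apply contDiff_const

lemma pd_comp {f : VF} {x : V3} (hf : DifferentiableAt ℝ f x) (j l : Fin 3) :
    pd j f x l = fderiv ℝ (fun y => f y l) x (Pi.single j 1) := by
  have h : ∀ i, DifferentiableAt ℝ (fun y => f y i) x := fun i =>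
    (differentiableAt_pi.mp hf) i
  have := fderiv_pi (𝕜 := ℝ) (φ := fun i (y : V3) => f y i) (x := x) h
  simp only [pd, this, ContinuousLinearMap.pi_apply]

/-- The commutator of stretching and transport is of zeroth order: explicit formula. -/
theorem stmt11 (ξ g : VF) (hξ : SmoothVF ξ) (hg : SmoothVF g) (x : V3) (l : Fin 3) :
    stretch ξ (transport ξ g) x l - transport ξ (stretch ξ g) x l =
      -∑ j : Fin 3, ∑ k : Fin 3, ξ x j * g x k * pd j (pd l ξ) x k := by
  have hdg : ∀ y, DifferentiableAt ℝ g y := fun y => hg.differentiable (by norm_num) y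
  have hξl : SmoothVF (pd l ξ) := smooth_pd hξ l
  have hdξl : ∀ y, DifferentiableAt ℝ (pd l ξ) y := fun y => hξl.differentiable (by norm_num) y
  have hgk : ∀ (k : Fin 3) (y : V3), DifferentiableAt ℝ (fun z => g z k) y := fun k y =>
    (differentiableAt_pi.mp (hdg y)) k
  have hξlk : ∀ (k : Fin 3) (y : V3), DifferentiableAt ℝ (fun z => pd l ξ z k) y := fun k y =>
    (differentiableAt_pi.mp (hdξl y)) k
  -- differentiability of stretch ξ g
  have hds : DifferentiableAt ℝ (stretch ξ g) x := by
    apply differentiableAt_pi.mpr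
    intro i
    have : (fun z => stretch ξ g z i) = fun z => ∑ k, g z k * pd i ξ z k := rfl
    rw [this]
    apply DifferentiableAt.fun_sum
    intro k _
    exact (hgk k x).mul ((differentiableAt_pi.mp ((smooth_pd hξ i).differentiable (by norm_num) x)) k)
  -- key: derivative of the stretch component
  have key : ∀ j : Fin 3, pd j (stretch ξ g) x l =
      ∑ k, (pd j g x k * pd l ξ x k + g x k * pd j (pd l ξ) x k) := by
    intro j
    rw [pd_comp hds j l]
    have h1 : (fun y => stretch ξ g y l) = fun y => ∑ k, g y k * pd l ξ y k := rfl
    rw [h1, fderiv_fun_sum (A := fun k y => g y k * pd l ξ y k) (fun k _ => (hgk k x).mul (hξlk k x))]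
    rw [ContinuousLinearMap.sum_apply]
    congr 1
    ext k
    rw [fderiv_fun_mul (hgk k x) (hξlk k x)]
    simp only [ContinuousLinearMap.add_apply, ContinuousLinearMap.coe_smul',
      Pi.smul_apply, smul_eq_mul]
    rw [← pd_comp (hdg x) j k, ← pd_comp (hdξl x) j k]
    ring
  have h1 : stretch ξ (transport ξ g) x l = ∑ j, ∑ k, ξ x j * pd j g x k * pd l ξ x k := by
    rw [show stretch ξ (transport ξ g) x l = ∑ k, transport ξ g x k * pd l ξ x k from rfl]
    rw [Finset.sum_comm]
    congr 1; ext k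
    rw [show transport ξ g x k = (∑ j, ξ x j • pd j g x) k from rfl]
    simp only [Finset.sum_apply, Pi.smul_apply, smul_eq_mul, Finset.sum_mul, mul_assoc]
  have h2 : transport ξ (stretch ξ g) x l =
      ∑ j, ∑ k, (ξ x j * pd j g x k * pd l ξ x k + ξ x j * (g x k * pd j (pd l ξ) x k)) := by
    rw [show transport ξ (stretch ξ g) x l = (∑ j, ξ x j • pd j (stretch ξ g) x) l from rfl]
    rw [Finset.sum_apply]
    congr 1; ext j
    rw [Pi.smul_apply, smul_eq_mul, key j, Finset.mul_sum]
    congr 1; ext k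
    ring
  rw [h1, h2, ← Finset.sum_sub_distrib, ← Finset.sum_neg_distrib]
  congr 1; ext j
  rw [← Finset.sum_sub_distrib, ← Finset.sum_neg_distrib]
  congr 1; ext k
  ring
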